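/- Duality between common co-divisors/co-multiples and common divisors/multiples: let w, x, y, a, b, d, z, u, v ∈ S satisfy w = a * x = b * y; a·S ∩ b·S = w·S; d divides both a and b and every common divisor of a and b in S divides d; w = d * z; and z = u * y = v * x. Then the only common divisor of u and v in S is 1, and u·S ∩ v·S = z·S. -/
import Mathlib


open scoped BigOperators

/-- `u` divides `w` in `S`: `w ∈ u·S`. -/
def SDvd {G : Type*} [Group G] (S : Submonoid G) (u w : G) : Prop := ∃ s ∈ S, w = u * s

/-- The left set `u·S = {u * s : s ∈ S}`. -/
def leftSet {G : Type*} [Group G] (S : Submonoid G) (u : G) : Set G := {w | ∃ s ∈ S, w = u * s}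

/-- `τ(u)`: the number of ordered factorizations `u = v * w` with `v, w ∈ S`. -/
noncomputable def tau {G : Type*} [Group G] (S : Submonoid G) (u : G) : ℕ :=
  Set.ncard {p : G × G | p.1 ∈ S ∧ p.2 ∈ S ∧ p.1 * p.2 = u}

/-- An integral monoid: a submonoid of a group satisfying Axioms I, II, III. -/
structure IntegralMonoid {G : Type*} [Group G] (S : Submonoid G) : Prop where
  ax1 : ∀ u ∈ S, u⁻¹ ∈ S → u = 1
  ax2 : ∀ u : G, ∃ x ∈ S, ∃ y ∈ S, u = x * y⁻¹ ∧
        ∀ z ∈ S, ∀ w ∈ S, u = z * w⁻¹ → ∃ c ∈ S, z = x * c ∧ w = y * c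
  ax3 : ∀ u ∈ S, {p : G × G | p.1 ∈ S ∧ p.2 ∈ S ∧ p.1 * p.2 = u}.Finite

theorem duality_gcd_codvd {G : Type*} [Group G] (S : Submonoid G) (hS : IntegralMonoid S)
    (w x y a b d z u v : G)
    (hw : w ∈ S) (hx : x ∈ S) (hy : y ∈ S) (ha : a ∈ S) (hb : b ∈ S)
    (hd : d ∈ S) (hz : z ∈ S) (hu : u ∈ S) (hv : v ∈ S)
    (h1 : w = a * x) (h2 : w = b * y)
    (h3 : leftSet S a ∩ leftSet S b = leftSet S w)
    (h4a : SDvd S d a) (h4b : SDvd S d b)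
    (h4c : ∀ e ∈ S, SDvd S e a → SDvd S e b → SDvd S e d)
    (h5 : w = d * z)
    (h6 : z = u * y) (h7 : z = v * x) :
    (∀ e ∈ S, SDvd S e u → SDvd S e v → e = 1) ∧
      leftSet S u ∩ leftSet S v = leftSet S z := by

  -- a = d * v and b = d * u
  obtain ⟨a', ha', haeq⟩ := h4a
  obtain ⟨b', hb', hbeq⟩ := h4b
  have hva : v = a' := by
    have hz' : z = a' * x := by
      apply mul_left_cancel (a := d)
      rw [← h5, h1, haeq, mul_assoc]
    have := h7.symm.trans hz'
    exact mul_right_cancel this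
  have hub : u = b' := by
    have hz' : z = b' * y := by
      apply mul_left_cancel (a := d)
      rw [← h5, h2, hbeq, mul_assoc]
    have := h6.symm.trans hz'
    exact mul_right_cancel this
  have hadv : a = d * v := by rw [hva]; exact haeq
  have hbdu : b = d * u := by rw [hub]; exact hbeq
  constructor
  · intro e he ⟨u1, hu1, hue⟩ ⟨v1, hv1, hve⟩
    have hde : d * e ∈ S := S.mul_mem hd he
    have h1' : SDvd S (d * e) a := ⟨v1, hv1, by rw [hadv, hve, mul_assoc]⟩
    have h2' : SDvd S (d * e) b := ⟨u1, hu1, by rw [hbdu, hue, mul_assoc]⟩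
    obtain ⟨c, hc, hdc⟩ := h4c (d * e) hde h1' h2'
    have : e * c = 1 := by
      apply mul_left_cancel (a := d)
      rw [← mul_assoc, ← hdc, mul_one]
    have hinv : e⁻¹ = c := inv_eq_of_mul_eq_one_right this
    exact hS.ax1 e he (hinv ▸ hc)
  · ext t
    constructor
    · rintro ⟨⟨s1, hs1, ht1⟩, ⟨s2, hs2, ht2⟩⟩
      have hdtb : d * t = b * s1 := by rw [ht1, hbdu, mul_assoc]
      have hdta : d * t = a * s2 := by rw [ht2, hadv, mul_assoc]
      have : d * t ∈ leftSet S a ∩ leftSet S b := ⟨⟨s2, hs2, hdta⟩, ⟨s1, hs1, hdtb⟩⟩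
      rw [h3] at this
      obtain ⟨c, hc, hwc⟩ := this
      refine ⟨c, hc, ?_⟩
      apply mul_left_cancel (a := d)
      rw [hwc, h5, mul_assoc]
    · rintro ⟨s, hs, hts⟩
      exact ⟨⟨y * s, S.mul_mem hy hs, by rw [hts, h6, mul_assoc]⟩,
             ⟨x * s, S.mul_mem hx hs, by rw [hts, h7, mul_assoc]⟩⟩
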